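/- arXiv:0909.0178 — 2 statements merged into one kernel-verified Lean document; each statement's English description precedes it below -/
import Mathlib

section
/- Fix K > 0. Let μ_n be probability measures on [−K,K] converging weakly to μ, and λ_n ∈ [0,1] converging to λ ∈ [0,1]. Then the rectangular R-transforms C^{(λ_n)}_{μ_n} converge to C^{(λ)}_μ uniformly on every compact subset of [0, K^{−2}). -/
open MeasureTheory Filter

noncomputable def Mfun (μ : Measure ℝ) (z : ℝ) : ℝ := ∫ t, t ^ 2 * z / (1 - t ^ 2 * z) ∂μ

noncomputable def Tfun (c z : ℝ) : ℝ := (c * z + 1) * (z + 1)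

noncomputable def Hfun (c : ℝ) (μ : Measure ℝ) (z : ℝ) : ℝ := z * Tfun c (Mfun μ z)

/-- `(H^{(c)}_ν)⁻¹`, the inverse of `H^{(c)}_ν` on `[0, K⁻²)`. -/
noncomputable def Hinv (c : ℝ) (μ : Measure ℝ) (K z : ℝ) : ℝ :=
  Function.invFunOn (Hfun c μ) (Set.Ico (0 : ℝ) (K ^ 2)⁻¹) z

/-- `(T^{(c)})⁻¹`, the inverse of `T^{(c)}` restricted to `[-1, ∞)`. -/
noncomputable def Tinv (c y : ℝ) : ℝ := Function.invFunOn (Tfun c) (Set.Ici (-1 : ℝ)) y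

/-- The rectangular R-transform with ratio `c` of `μ` (supported in `[-K,K]`). -/
noncomputable def Cfun (c : ℝ) (μ : Measure ℝ) (K z : ℝ) : ℝ :=
  if z = 0 then 0 else Tinv c (z / Hinv c μ K z)

section Aux

variable {K : ℝ}

private lemma ratio_mono {s1 s2 : ℝ} (h0 : 0 ≤ s1) (h12 : s1 ≤ s2) (h2 : s2 < 1) :
    s1 / (1 - s1) ≤ s2 / (1 - s2) := by
  rw [div_le_div_iff₀ (by linarith) (by linarith)]
  nlinarith

private lemma Ksq_mul_lt_one (hK : 0 < K) {z : ℝ} (hz : z ∈ Set.Ico (0:ℝ) (K^2)⁻¹) :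
    K^2 * z < 1 := by
  have h := mul_lt_mul_of_pos_left hz.2 (show (0:ℝ) < K^2 by positivity)
  rwa [mul_inv_cancel₀ (by positivity : (K:ℝ)^2 ≠ 0)] at h

private lemma tsq_mul_le {z t : ℝ} (hz : 0 ≤ z) (ht : t ∈ Set.Icc (-K) K) :
    t^2 * z ≤ K^2 * z :=
  mul_le_mul_of_nonneg_right (sq_le_sq' ht.1 ht.2) hz

private lemma ae_Icc {ν : Measure ℝ} (hν : ν (Set.Icc (-K) K)ᶜ = 0) :
    ∀ᵐ t ∂ν, t ∈ Set.Icc (-K) K := by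
  rw [ae_iff]
  have h : {a : ℝ | ¬ a ∈ Set.Icc (-K) K} = (Set.Icc (-K) K)ᶜ := rfl
  rw [h]; exact hν

private lemma g_nonneg {z t : ℝ} (hz : 0 ≤ z) (h1 : t^2*z < 1) : 0 ≤ t^2*z/(1-t^2*z) :=
  div_nonneg (mul_nonneg (sq_nonneg t) hz) (by linarith)

private lemma Mfun_integrable (hK : 0 < K) (ν : Measure ℝ) [IsProbabilityMeasure ν]
    (hν : ν (Set.Icc (-K) K)ᶜ = 0) {z : ℝ} (hz : z ∈ Set.Ico (0:ℝ) (K^2)⁻¹) :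
    Integrable (fun t => t^2*z/(1-t^2*z)) ν := by
  have hmeas : Measurable fun t : ℝ => t^2*z/(1-t^2*z) := by fun_prop
  refine (integrable_const (K^2*z/(1-K^2*z))).mono' hmeas.aestronglyMeasurable ?_
  filter_upwards [ae_Icc hν] with t ht
  have h1 : t^2*z ≤ K^2*z := tsq_mul_le hz.1 ht
  have h2 : K^2*z < 1 := Ksq_mul_lt_one hK hz
  rw [Real.norm_eq_abs, abs_of_nonneg (g_nonneg hz.1 (lt_of_le_of_lt h1 h2))]
  exact ratio_mono (mul_nonneg (sq_nonneg t) hz.1) h1 h2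

private lemma Mfun_nonneg (hK : 0 < K) (ν : Measure ℝ) [IsProbabilityMeasure ν]
    (hν : ν (Set.Icc (-K) K)ᶜ = 0) {z : ℝ} (hz : z ∈ Set.Ico (0:ℝ) (K^2)⁻¹) :
    0 ≤ Mfun ν z := by
  refine integral_nonneg_of_ae ?_
  filter_upwards [ae_Icc hν] with t ht
  exact g_nonneg hz.1 (lt_of_le_of_lt (tsq_mul_le hz.1 ht) (Ksq_mul_lt_one hK hz))

private lemma Mfun_zero (ν : Measure ℝ) : Mfun ν 0 = 0 := by simp [Mfun]

private lemma Mfun_monoOn (hK : 0 < K) (ν : Measure ℝ) [IsProbabilityMeasure ν]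
    (hν : ν (Set.Icc (-K) K)ᶜ = 0) :
    MonotoneOn (Mfun ν) (Set.Ico (0:ℝ) (K^2)⁻¹) := by
  intro z1 h1 z2 h2 h12
  refine integral_mono_ae (Mfun_integrable hK ν hν h1) (Mfun_integrable hK ν hν h2) ?_
  filter_upwards [ae_Icc hν] with t ht
  exact ratio_mono (mul_nonneg (sq_nonneg t) h1.1)
    (mul_le_mul_of_nonneg_left h12 (sq_nonneg t))
    (lt_of_le_of_lt (tsq_mul_le h2.1 ht) (Ksq_mul_lt_one hK h2))

private lemma Mfun_contOn (hK : 0 < K) (ν : Measure ℝ) [IsProbabilityMeasure ν]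
    (hν : ν (Set.Icc (-K) K)ᶜ = 0) :
    ContinuousOn (Mfun ν) (Set.Ico (0:ℝ) (K^2)⁻¹) := by
  intro z₀ hz₀
  obtain ⟨r, hz₀r, hrK⟩ : ∃ r, z₀ < r ∧ r < (K^2)⁻¹ :=
    ⟨(z₀ + (K^2)⁻¹)/2, by linarith [hz₀.2], by linarith [hz₀.2]⟩
  have hrD : r ∈ Set.Ico (0:ℝ) (K^2)⁻¹ := ⟨le_trans hz₀.1 hz₀r.le, hrK⟩
  have h2 : K^2*r < 1 := Ksq_mul_lt_one hK hrD
  apply continuousWithinAt_of_dominated (bound := fun _ => K^2*r/(1-K^2*r))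
  · exact Eventually.of_forall fun z =>
      (by fun_prop : Measurable fun t : ℝ => t^2*z/(1-t^2*z)).aestronglyMeasurable
  · filter_upwards [nhdsWithin_le_nhds (Iio_mem_nhds hz₀r), self_mem_nhdsWithin]
      with z hzr hzD
    filter_upwards [ae_Icc hν] with t ht
    have h1 : t^2*z ≤ K^2*r :=
      le_trans (tsq_mul_le hzD.1 ht)
        (mul_le_mul_of_nonneg_left (le_of_lt hzr) (by positivity))
    rw [Real.norm_eq_abs, abs_of_nonneg (g_nonneg hzD.1 (lt_of_le_of_lt h1 h2))]
    exact ratio_mono (mul_nonneg (sq_nonneg t) hzD.1) h1 h2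
  · exact integrable_const _
  · filter_upwards [ae_Icc hν] with t ht
    have hden : 1 - t^2*z₀ ≠ 0 := by
      have h1 : t^2*z₀ ≤ K^2*z₀ := tsq_mul_le hz₀.1 ht
      have h2' : K^2*z₀ < 1 := Ksq_mul_lt_one hK hz₀
      intro h; nlinarith
    exact (((continuous_const.mul continuous_id).continuousAt).div
      ((continuous_const.sub (continuous_const.mul continuous_id)).continuousAt)
      hden).continuousWithinAt

private lemma Tfun_one_le {c w : ℝ} (hc : 0 ≤ c) (hw : 0 ≤ w) : 1 ≤ Tfun c w := by
  simp only [Tfun]; nlinarith [mul_nonneg (mul_nonneg hc hw) hw, mul_nonneg hc hw]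

private lemma Tfun_mono {c w1 w2 : ℝ} (hc : 0 ≤ c) (h0 : 0 ≤ w1) (h : w1 ≤ w2) :
    Tfun c w1 ≤ Tfun c w2 := by
  simp only [Tfun]
  nlinarith [mul_nonneg hc (mul_nonneg (add_nonneg h0 (h0.trans h)) (sub_nonneg.2 h))]

private lemma Hfun_zero (c : ℝ) (ν : Measure ℝ) : Hfun c ν 0 = 0 := by simp [Hfun]

private lemma Hfun_strictMonoOn (hK : 0 < K) {c : ℝ} (hc : 0 ≤ c) (ν : Measure ℝ)
    [IsProbabilityMeasure ν] (hν : ν (Set.Icc (-K) K)ᶜ = 0) :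
    StrictMonoOn (Hfun c ν) (Set.Ico (0:ℝ) (K^2)⁻¹) := by
  intro z1 h1 z2 h2 h12
  have hM1 : 0 ≤ Mfun ν z1 := Mfun_nonneg hK ν hν h1
  have hM12 : Mfun ν z1 ≤ Mfun ν z2 := Mfun_monoOn hK ν hν h1 h2 h12.le
  have hT1 : 1 ≤ Tfun c (Mfun ν z1) := Tfun_one_le hc hM1
  have hT12 : Tfun c (Mfun ν z1) ≤ Tfun c (Mfun ν z2) := Tfun_mono hc hM1 hM12
  simp only [Hfun]
  calc z1 * Tfun c (Mfun ν z1) ≤ z1 * Tfun c (Mfun ν z2) :=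
        mul_le_mul_of_nonneg_left hT12 h1.1
    _ < z2 * Tfun c (Mfun ν z2) := mul_lt_mul_of_pos_right h12 (by linarith)

private lemma le_Hfun (hK : 0 < K) {c : ℝ} (hc : 0 ≤ c) (ν : Measure ℝ)
    [IsProbabilityMeasure ν] (hν : ν (Set.Icc (-K) K)ᶜ = 0) {z : ℝ}
    (hz : z ∈ Set.Ico (0:ℝ) (K^2)⁻¹) : z ≤ Hfun c ν z := by
  have h := Tfun_one_le hc (Mfun_nonneg hK ν hν hz)
  simpa [Hfun] using le_mul_of_one_le_right hz.1 h

private lemma Hfun_contOn (hK : 0 < K) (c : ℝ) (ν : Measure ℝ) [IsProbabilityMeasure ν]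
    (hν : ν (Set.Icc (-K) K)ᶜ = 0) :
    ContinuousOn (Hfun c ν) (Set.Ico (0:ℝ) (K^2)⁻¹) := by
  have hM := Mfun_contOn hK ν hν
  have hrw : Hfun c ν = fun z => z * ((c * Mfun ν z + 1) * (Mfun ν z + 1)) := rfl
  rw [hrw]
  exact continuousOn_id.mul
    (((continuousOn_const.mul hM).add continuousOn_const).mul (hM.add continuousOn_const))

private lemma Hfun_surjOn (hK : 0 < K) {c : ℝ} (hc : 0 ≤ c) (ν : Measure ℝ)
    [IsProbabilityMeasure ν] (hν : ν (Set.Icc (-K) K)ᶜ = 0) {y : ℝ}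
    (hy : y ∈ Set.Ico (0:ℝ) (K^2)⁻¹) :
    ∃ x ∈ Set.Ico (0:ℝ) (K^2)⁻¹, Hfun c ν x = y := by
  have hsub : Set.Icc (0:ℝ) y ⊆ Set.Ico (0:ℝ) (K^2)⁻¹ :=
    fun w hw => ⟨hw.1, lt_of_le_of_lt hw.2 hy.2⟩
  have hcont := (Hfun_contOn hK c ν hν).mono hsub
  have hy' : y ∈ Set.Icc (Hfun c ν 0) (Hfun c ν y) := by
    rw [Hfun_zero]; exact ⟨hy.1, le_Hfun hK hc ν hν hy⟩
  obtain ⟨x, hx, hHx⟩ := intermediate_value_Icc hy.1 hcont hy'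
  exact ⟨x, hsub hx, hHx⟩

private lemma Hinv_spec (hK : 0 < K) {c : ℝ} (hc : 0 ≤ c) (ν : Measure ℝ)
    [IsProbabilityMeasure ν] (hν : ν (Set.Icc (-K) K)ᶜ = 0) {y : ℝ}
    (hy : y ∈ Set.Ico (0:ℝ) (K^2)⁻¹) :
    Hinv c ν K y ∈ Set.Ico (0:ℝ) (K^2)⁻¹ ∧ Hfun c ν (Hinv c ν K y) = y := by
  obtain ⟨x, hxD, hx⟩ := Hfun_surjOn hK hc ν hν hy
  exact ⟨Function.invFunOn_mem ⟨x, hxD, hx⟩, Function.invFunOn_eq ⟨x, hxD, hx⟩⟩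

private lemma Hinv_lt (hK : 0 < K) {c : ℝ} (hc : 0 ≤ c) (ν : Measure ℝ)
    [IsProbabilityMeasure ν] (hν : ν (Set.Icc (-K) K)ᶜ = 0) {y a : ℝ}
    (hy : y ∈ Set.Ico (0:ℝ) (K^2)⁻¹) (ha : a ∈ Set.Ico (0:ℝ) (K^2)⁻¹)
    (h : y < Hfun c ν a) : Hinv c ν K y < a := by
  obtain ⟨hmem, heq⟩ := Hinv_spec hK hc ν hν hy
  by_contra hle
  push_neg at hle
  have := (Hfun_strictMonoOn hK hc ν hν).monotoneOn ha hmem hle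
  rw [heq] at this; linarith

private lemma lt_Hinv (hK : 0 < K) {c : ℝ} (hc : 0 ≤ c) (ν : Measure ℝ)
    [IsProbabilityMeasure ν] (hν : ν (Set.Icc (-K) K)ᶜ = 0) {y a : ℝ}
    (hy : y ∈ Set.Ico (0:ℝ) (K^2)⁻¹) (ha : a ∈ Set.Ico (0:ℝ) (K^2)⁻¹)
    (h : Hfun c ν a < y) : a < Hinv c ν K y := by
  obtain ⟨hmem, heq⟩ := Hinv_spec hK hc ν hν hy
  by_contra hle
  push_neg at hle
  have := (Hfun_strictMonoOn hK hc ν hν).monotoneOn hmem ha hle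
  rw [heq] at this; linarith

private lemma Hinv_zero (hK : 0 < K) {c : ℝ} (hc : 0 ≤ c) (ν : Measure ℝ)
    [IsProbabilityMeasure ν] (hν : ν (Set.Icc (-K) K)ᶜ = 0) : Hinv c ν K 0 = 0 := by
  have h0 : (0:ℝ) ∈ Set.Ico (0:ℝ) (K^2)⁻¹ := ⟨le_refl 0, by positivity⟩
  obtain ⟨hmem, heq⟩ := Hinv_spec hK hc ν hν h0
  by_contra hne
  have hpos : 0 < Hinv c ν K 0 := lt_of_le_of_ne hmem.1 (Ne.symm hne)
  have := Hfun_strictMonoOn hK hc ν hν h0 hmem hpos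
  rw [heq, Hfun_zero] at this; exact lt_irrefl 0 this

private lemma Tfun_injOn {c : ℝ} (hc : c ∈ Set.Icc (0:ℝ) 1) :
    Set.InjOn (Tfun c) (Set.Ici (-1 : ℝ)) := by
  intro a ha b hb h
  simp only [Set.mem_Ici] at ha hb
  simp only [Tfun] at h
  have h2 : (a - b) * (c*(a+b) + c + 1) = 0 := by linear_combination h
  rcases mul_eq_zero.1 h2 with h3 | h3
  · linarith
  · have h4 : c*(a+b+2) = c - 1 := by linear_combination h3
    have h5 : 0 ≤ c*(a+b+2) := mul_nonneg hc.1 (by linarith)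
    have hc1 : c = 1 := le_antisymm hc.2 (by linarith)
    have h6 : a + b + 2 = 0 := by nlinarith
    linarith

private lemma Tinv_Tfun {c w : ℝ} (hc : c ∈ Set.Icc (0:ℝ) 1) (hw : 0 ≤ w) :
    Tinv c (Tfun c w) = w := by
  have hw' : w ∈ Set.Ici (-1:ℝ) := le_trans (by norm_num) hw
  simp only [Tinv]
  exact Tfun_injOn hc (Function.invFunOn_apply_mem hw') hw'
    (Function.invFunOn_apply_eq hw')

private lemma Cfun_eq (hK : 0 < K) {c : ℝ} (hc : c ∈ Set.Icc (0:ℝ) 1) (ν : Measure ℝ)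
    [IsProbabilityMeasure ν] (hν : ν (Set.Icc (-K) K)ᶜ = 0) {z : ℝ}
    (hz : z ∈ Set.Ico (0:ℝ) (K^2)⁻¹) :
    Cfun c ν K z = Mfun ν (Hinv c ν K z) := by
  rcases eq_or_ne z 0 with rfl | hz0
  · simp [Cfun, Hinv_zero hK hc.1 ν hν, Mfun_zero]
  · obtain ⟨hmem, heq⟩ := Hinv_spec hK hc.1 ν hν hz
    set x := Hinv c ν K z with hxdef
    have hxpos : 0 < x := by
      refine lt_of_le_of_ne hmem.1 ?_
      intro h
      exact hz0 (by rw [← heq, ← h, Hfun_zero])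
    have hdiv : z / x = Tfun c (Mfun ν x) := by
      rw [← heq]
      simp only [Hfun]
      rw [mul_comm, mul_div_assoc, div_self hxpos.ne', mul_one]
    rw [Cfun, if_neg hz0, hdiv, Tinv_Tfun hc (Mfun_nonneg hK ν hν hmem)]

end Aux

section Conv

private lemma limit_supp {K : ℝ} (μs : ℕ → Measure ℝ) (μ : Measure ℝ)
    [∀ n, IsProbabilityMeasure (μs n)] [IsProbabilityMeasure μ]
    (hsupp : ∀ n, μs n (Set.Icc (-K) K)ᶜ = 0)
    (hweak : ∀ f : BoundedContinuousFunction ℝ ℝ,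
      Tendsto (fun n => ∫ t, f t ∂(μs n)) atTop (nhds (∫ t, f t ∂μ))) :
    μ (Set.Icc (-K) K)ᶜ = 0 := by
  let P : ℕ → ProbabilityMeasure ℝ := fun n => ⟨μs n, inferInstance⟩
  let Q : ProbabilityMeasure ℝ := ⟨μ, inferInstance⟩
  have htend : Tendsto P atTop (nhds Q) := by
    rw [ProbabilityMeasure.tendsto_iff_forall_integral_tendsto]
    exact hweak
  have hopen : IsOpen (Set.Icc (-K) K)ᶜ := isClosed_Icc.isOpen_compl
  have h := ProbabilityMeasure.le_liminf_measure_open_of_tendsto htend hopen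
  have he : (fun i : ℕ => (P i : Measure ℝ) (Set.Icc (-K) K)ᶜ) = fun _ => 0 :=
    funext fun i => hsupp i
  rw [he, liminf_const] at h
  exact le_zero_iff.mp h

private lemma Mfun_tendsto {K : ℝ} (hK : 0 < K) (μs : ℕ → Measure ℝ) (μ : Measure ℝ)
    [∀ n, IsProbabilityMeasure (μs n)] [IsProbabilityMeasure μ]
    (hsupp : ∀ n, μs n (Set.Icc (-K) K)ᶜ = 0) (hsuppμ : μ (Set.Icc (-K) K)ᶜ = 0)
    (hweak : ∀ f : BoundedContinuousFunction ℝ ℝ,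
      Tendsto (fun n => ∫ t, f t ∂(μs n)) atTop (nhds (∫ t, f t ∂μ)))
    {z : ℝ} (hz : z ∈ Set.Ico (0:ℝ) (K^2)⁻¹) :
    Tendsto (fun n => Mfun (μs n) z) atTop (nhds (Mfun μ z)) := by
  have hKz : K^2*z < 1 := Ksq_mul_lt_one hK hz
  set φ : ℝ → ℝ := fun t => min (t^2*z) (K^2*z) / (1 - min (t^2*z) (K^2*z)) with hφ
  have hmin_nonneg : ∀ t : ℝ, 0 ≤ min (t^2*z) (K^2*z) := fun t =>
    le_min (mul_nonneg (sq_nonneg t) hz.1) (mul_nonneg (by positivity) hz.1)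
  have hmin_lt : ∀ t : ℝ, min (t^2*z) (K^2*z) < 1 := fun t =>
    lt_of_le_of_lt (min_le_right _ _) hKz
  have hden : ∀ t : ℝ, 1 - min (t^2*z) (K^2*z) ≠ 0 := fun t => by
    have := hmin_lt t; intro h; linarith
  have hcont : Continuous φ := by
    apply Continuous.div
    · fun_prop
    · fun_prop
    · exact hden
  have hbdd : ∀ t : ℝ, ‖φ t‖ ≤ K^2*z/(1-K^2*z) := fun t => by
    have h1 := hmin_nonneg t
    have h2 := hmin_lt t
    rw [Real.norm_eq_abs, abs_of_nonneg (div_nonneg h1 (by linarith))]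
    exact ratio_mono h1 (min_le_right _ _) hKz
  set f : BoundedContinuousFunction ℝ ℝ :=
    BoundedContinuousFunction.ofNormedAddCommGroup φ hcont _ hbdd with hf
  have key : ∀ ν : Measure ℝ, ν (Set.Icc (-K) K)ᶜ = 0 → ∫ t, f t ∂ν = Mfun ν z := by
    intro ν hν
    apply integral_congr_ae
    filter_upwards [ae_Icc hν] with t ht
    have h1 : t^2*z ≤ K^2*z := tsq_mul_le hz.1 ht
    show φ t = t^2*z/(1-t^2*z)
    rw [hφ]
    simp only [min_eq_left h1]
  have h := hweak f
  rw [key μ hsuppμ] at h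
  exact Filter.Tendsto.congr (fun n => key (μs n) (hsupp n)) h

private lemma Hfun_tendsto {K : ℝ} (hK : 0 < K) (μs : ℕ → Measure ℝ) (μ : Measure ℝ)
    [∀ n, IsProbabilityMeasure (μs n)] [IsProbabilityMeasure μ]
    (hsupp : ∀ n, μs n (Set.Icc (-K) K)ᶜ = 0) (hsuppμ : μ (Set.Icc (-K) K)ᶜ = 0)
    (hweak : ∀ f : BoundedContinuousFunction ℝ ℝ,
      Tendsto (fun n => ∫ t, f t ∂(μs n)) atTop (nhds (∫ t, f t ∂μ)))
    (lams : ℕ → ℝ) (lam : ℝ) (hlamconv : Tendsto lams atTop (nhds lam))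
    {w : ℝ} (hw : w ∈ Set.Ico (0:ℝ) (K^2)⁻¹) :
    Tendsto (fun n => Hfun (lams n) (μs n) w) atTop (nhds (Hfun lam μ w)) := by
  have hM := Mfun_tendsto hK μs μ hsupp hsuppμ hweak hw
  have hrw : ∀ n, Hfun (lams n) (μs n) w
      = w * ((lams n * Mfun (μs n) w + 1) * (Mfun (μs n) w + 1)) := fun n => rfl
  rw [show Hfun lam μ w = w * ((lam * Mfun μ w + 1) * (Mfun μ w + 1)) from rfl]
  simp only [hrw]
  exact (((hlamconv.mul hM).add tendsto_const_nhds).mul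
    (hM.add tendsto_const_nhds)).const_mul w

end Conv

/-- If probability measures `μ n` on `[-K,K]` converge weakly to `μ`
and `λ n ∈ [0,1]` converge to `λ`, then `C^{(λ_n)}_{μ_n}` converges to
`C^{(λ)}_μ` uniformly on every compact subset of `[0, K⁻²)`. -/
theorem stmt12 (K : ℝ) (hK : 0 < K)
    (μs : ℕ → Measure ℝ) (μ : Measure ℝ)
    [∀ n, IsProbabilityMeasure (μs n)] [IsProbabilityMeasure μ]
    (hsupp : ∀ n, μs n (Set.Icc (-K) K)ᶜ = 0)
    (hweak : ∀ f : BoundedContinuousFunction ℝ ℝ,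
      Tendsto (fun n => ∫ t, f t ∂(μs n)) atTop (nhds (∫ t, f t ∂μ)))
    (lams : ℕ → ℝ) (lam : ℝ)
    (hlams : ∀ n, lams n ∈ Set.Icc (0 : ℝ) 1) (hlam : lam ∈ Set.Icc (0 : ℝ) 1)
    (hlamconv : Tendsto lams atTop (nhds lam)) :
    ∀ S ⊆ Set.Ico (0 : ℝ) (K ^ 2)⁻¹, IsCompact S →
      TendstoUniformlyOn (fun n z => Cfun (lams n) (μs n) K z)
        (fun z => Cfun lam μ K z) atTop S := by
  intro S hS hcomp
  have hsuppμ : μ (Set.Icc (-K) K)ᶜ = 0 := limit_supp μs μ hsupp hweak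
  rw [← tendstoLocallyUniformlyOn_iff_tendstoUniformlyOn_of_compact hcomp,
      Metric.tendstoLocallyUniformlyOn_iff]
  intro ε hε x hxS
  have hx : x ∈ Set.Ico (0:ℝ) (K^2)⁻¹ := hS hxS
  obtain ⟨hξD, hHξ⟩ := Hinv_spec hK hlam.1 μ hsuppμ hx
  set ξ := Hinv lam μ K x with hξdef
  have hMcont := Mfun_contOn hK μ hsuppμ ξ hξD
  rw [Metric.continuousWithinAt_iff] at hMcont
  obtain ⟨η, hη, hball⟩ := hMcont (ε/4) (by linarith)
  set u := min (ξ + η/2) ((ξ + (K^2)⁻¹)/2) with hu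
  have hξu : ξ < u := lt_min (by linarith) (by linarith [hξD.2])
  have huK : u < (K^2)⁻¹ := lt_of_le_of_lt (min_le_right _ _) (by linarith [hξD.2])
  have huD : u ∈ Set.Ico (0:ℝ) (K^2)⁻¹ := ⟨le_trans hξD.1 hξu.le, huK⟩
  have huξ : u ≤ ξ + η/2 := min_le_left _ _
  have hudist : dist u ξ < η := by
    rw [Real.dist_eq, abs_of_nonneg (by linarith)]
    linarith
  have hxHu : x < Hfun lam μ u := by
    rw [← hHξ]; exact Hfun_strictMonoOn hK hlam.1 μ hsuppμ hξD huD hξu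
  set r := (x + Hfun lam μ u)/2 with hr
  have hxr : x < r := by rw [hr]; linarith
  have hrHu : r < Hfun lam μ u := by rw [hr]; linarith
  have hE1 : ∀ᶠ n in atTop, r < Hfun (lams n) (μs n) u :=
    (Hfun_tendsto hK μs μ hsupp hsuppμ hweak lams lam hlamconv huD).eventually
      (eventually_gt_nhds hrHu)
  have hMuξ : Mfun μ u < Mfun μ ξ + ε/2 := by
    have h := hball huD hudist
    rw [Real.dist_eq, abs_lt] at h
    linarith [h.2]
  have hE2 : ∀ᶠ n in atTop, Mfun (μs n) u < Mfun μ ξ + ε/2 :=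
    (Mfun_tendsto hK μs μ hsupp hsuppμ hweak huD).eventually (eventually_lt_nhds hMuξ)
  by_cases hx0 : x = 0
  · -- x = 0, ξ = 0
    have hξ0 : ξ = 0 := by
      rw [hξdef, hx0]; exact Hinv_zero hK hlam.1 μ hsuppμ
    have hMξ0 : Mfun μ ξ = 0 := by rw [hξ0, Mfun_zero]
    refine ⟨S ∩ Set.Ioo (-1 : ℝ) r, inter_mem_nhdsWithin S
      (Ioo_mem_nhds (by linarith) hxr), ?_⟩
    filter_upwards [hE1, hE2] with n h1 h2
    intro y hy
    have hyD : y ∈ Set.Ico (0:ℝ) (K^2)⁻¹ := hS hy.1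
    have hyr : y < r := hy.2.2
    obtain ⟨hwnD, hHwn⟩ := Hinv_spec hK (hlams n).1 (μs n) (hsupp n) hyD
    have hwnu : Hinv (lams n) (μs n) K y < u :=
      Hinv_lt hK (hlams n).1 (μs n) (hsupp n) hyD huD (by linarith)
    have hupper : Mfun (μs n) (Hinv (lams n) (μs n) K y) ≤ Mfun (μs n) u :=
      Mfun_monoOn hK (μs n) (hsupp n) hwnD huD hwnu.le
    have hlower : 0 ≤ Mfun (μs n) (Hinv (lams n) (μs n) K y) :=
      Mfun_nonneg hK (μs n) (hsupp n) hwnD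
    obtain ⟨hwD, hHw⟩ := Hinv_spec hK hlam.1 μ hsuppμ hyD
    have hwu : Hinv lam μ K y < u :=
      Hinv_lt hK hlam.1 μ hsuppμ hyD huD (by linarith)
    have hwdist : dist (Hinv lam μ K y) ξ < η := by
      rw [Real.dist_eq, hξ0, sub_zero, abs_of_nonneg hwD.1]
      linarith
    have hgy := hball hwD hwdist
    rw [Real.dist_eq, abs_lt] at hgy
    rw [Cfun_eq hK hlam μ hsuppμ hyD, Cfun_eq hK (hlams n) (μs n) (hsupp n) hyD,
      Real.dist_eq, abs_lt]
    constructor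
    · linarith [hgy.1, h2, hupper]
    · linarith [hgy.2, hlower]
  · -- x ≠ 0
    have hξpos : 0 < ξ := by
      refine lt_of_le_of_ne hξD.1 ?_
      intro h
      exact hx0 (by rw [← hHξ, ← h, Hfun_zero])
    set lam₀ := max 0 (ξ - η/2) with hlam₀
    have hlam₀D : lam₀ ∈ Set.Ico (0:ℝ) (K^2)⁻¹ :=
      ⟨le_max_left _ _, max_lt (by positivity) (by linarith [hξD.2])⟩
    have hlam₀ξ : lam₀ < ξ := max_lt hξpos (by linarith)
    have hlam₀ge : ξ - η/2 ≤ lam₀ := le_max_right _ _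
    have hHlam₀ : Hfun lam μ lam₀ < x := by
      rw [← hHξ]; exact Hfun_strictMonoOn hK hlam.1 μ hsuppμ hlam₀D hξD hlam₀ξ
    set l := (Hfun lam μ lam₀ + x)/2 with hl
    have hl1 : Hfun lam μ lam₀ < l := by rw [hl]; linarith
    have hl2 : l < x := by rw [hl]; linarith
    have hE3a : ∀ᶠ n in atTop, Hfun (lams n) (μs n) lam₀ < l :=
      (Hfun_tendsto hK μs μ hsupp hsuppμ hweak lams lam hlamconv hlam₀D).eventually
        (eventually_lt_nhds hl1)
    have hlam₀dist : dist lam₀ ξ < η := by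
      rw [Real.dist_eq, abs_lt]
      constructor <;> linarith
    have hMlam₀lt : Mfun μ ξ - ε/2 < Mfun μ lam₀ := by
      have h := hball hlam₀D hlam₀dist
      rw [Real.dist_eq, abs_lt] at h
      linarith [h.1]
    have hE3b : ∀ᶠ n in atTop, Mfun μ ξ - ε/2 < Mfun (μs n) lam₀ :=
      (Mfun_tendsto hK μs μ hsupp hsuppμ hweak hlam₀D).eventually
        (eventually_gt_nhds hMlam₀lt)
    refine ⟨S ∩ Set.Ioo l r, inter_mem_nhdsWithin S (Ioo_mem_nhds hl2 hxr), ?_⟩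
    filter_upwards [hE1, hE2, hE3a, hE3b] with n h1 h2 h3 h4
    intro y hy
    have hyD : y ∈ Set.Ico (0:ℝ) (K^2)⁻¹ := hS hy.1
    have hyl : l < y := hy.2.1
    have hyr : y < r := hy.2.2
    obtain ⟨hwnD, hHwn⟩ := Hinv_spec hK (hlams n).1 (μs n) (hsupp n) hyD
    have hwnu : Hinv (lams n) (μs n) K y < u :=
      Hinv_lt hK (hlams n).1 (μs n) (hsupp n) hyD huD (by linarith)
    have hwnlam₀ : lam₀ < Hinv (lams n) (μs n) K y :=
      lt_Hinv hK (hlams n).1 (μs n) (hsupp n) hyD hlam₀D (by linarith)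
    have hupper : Mfun (μs n) (Hinv (lams n) (μs n) K y) ≤ Mfun (μs n) u :=
      Mfun_monoOn hK (μs n) (hsupp n) hwnD huD hwnu.le
    have hlower : Mfun (μs n) lam₀ ≤ Mfun (μs n) (Hinv (lams n) (μs n) K y) :=
      Mfun_monoOn hK (μs n) (hsupp n) hlam₀D hwnD hwnlam₀.le
    obtain ⟨hwD, hHw⟩ := Hinv_spec hK hlam.1 μ hsuppμ hyD
    have hwu : Hinv lam μ K y < u :=
      Hinv_lt hK hlam.1 μ hsuppμ hyD huD (by linarith)
    have hwlam₀ : lam₀ < Hinv lam μ K y :=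
      lt_Hinv hK hlam.1 μ hsuppμ hyD hlam₀D (by linarith)
    have hwdist : dist (Hinv lam μ K y) ξ < η := by
      rw [Real.dist_eq, abs_lt]
      constructor <;> linarith
    have hgy := hball hwD hwdist
    rw [Real.dist_eq, abs_lt] at hgy
    rw [Cfun_eq hK hlam μ hsuppμ hyD, Cfun_eq hK (hlams n) (μs n) (hsupp n) hyD,
      Real.dist_eq, abs_lt]
    constructor
    · linarith [hgy.1, h2, hupper]
    · linarith [hgy.2, h4, hlower]
end

section
/- For any probability measure μ supported in [−K,K] and z in a neighborhood of 0, C^{(0)}_μ(z) = z R_{μ²}(z), where μ² is the push-forward of μ by t ↦ t² and R is the (analytic convention) R-transform. -/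
open MeasureTheory

private lemma int_bdd (μ : Measure ℝ) [IsFiniteMeasure μ] {f : ℝ → ℝ}
    (hf : AEStronglyMeasurable f μ) {C : ℝ} (h : ∀ᵐ t ∂μ, |f t| ≤ C) :
    Integrable f μ :=
  Integrable.mono' (integrable_const C) hf (h.mono fun t ht => by simpa using ht)

private lemma Gmono (μ : Measure ℝ) [IsProbabilityMeasure μ] {K w1 w2 : ℝ}
    (hK : 0 < K) (hae : ∀ᵐ t ∂μ, t ^ 2 ≤ K ^ 2)
    (h1 : K ^ 2 < w1) (hlt : w1 < w2) :
    ∫ t, (w2 - t ^ 2)⁻¹ ∂μ < ∫ t, (w1 - t ^ 2)⁻¹ ∂μ := by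
  have hK2 : (0:ℝ) < K ^ 2 := by positivity
  have h2 : K ^ 2 < w2 := h1.trans hlt
  have hw1 : 0 < w1 := hK2.trans h1
  have hw2 : 0 < w2 := hK2.trans h2
  set c : ℝ := (w2 - w1) / (w1 * w2) with hc
  have hcpos : 0 < c := div_pos (by linarith) (by positivity)
  have hmeas : ∀ w : ℝ, AEStronglyMeasurable (fun t : ℝ => (w - t ^ 2)⁻¹) μ := by
    intro w
    exact ((measurable_const.sub (measurable_id.pow_const 2)).inv).aestronglyMeasurable
  have hint : ∀ w : ℝ, K ^ 2 < w → Integrable (fun t : ℝ => (w - t ^ 2)⁻¹) μ := by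
    intro w hw
    refine int_bdd μ (hmeas w) (C := (w - K ^ 2)⁻¹) ?_
    filter_upwards [hae] with t ht
    have h0 : 0 < w - t ^ 2 := by nlinarith [sq_nonneg t]
    rw [abs_of_pos (inv_pos.2 h0)]
    gcongr
  have key : ∀ᵐ t ∂μ, (w2 - t ^ 2)⁻¹ + c ≤ (w1 - t ^ 2)⁻¹ := by
    filter_upwards [hae] with t ht
    have ht0 : 0 ≤ t ^ 2 := sq_nonneg t
    have hd1 : 0 < w1 - t ^ 2 := by linarith
    have hd2 : 0 < w2 - t ^ 2 := by linarith
    have heq : (w1 - t ^ 2)⁻¹ - (w2 - t ^ 2)⁻¹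
        = (w2 - w1) / ((w1 - t ^ 2) * (w2 - t ^ 2)) := by
      field_simp
      ring
    have hle : c ≤ (w2 - w1) / ((w1 - t ^ 2) * (w2 - t ^ 2)) := by
      rw [hc]
      exact div_le_div_of_nonneg_left (by linarith) (by positivity)
        (mul_le_mul (by linarith) (by linarith) hd2.le hw1.le)
    linarith
  have hintc : Integrable (fun t : ℝ => (w2 - t ^ 2)⁻¹ + c) μ :=
    (hint w2 h2).add (integrable_const c)
  have hmono := integral_mono_ae hintc (hint w1 h1) key
  rw [integral_add (hint w2 h2) (integrable_const c), integral_const, probReal_univ] at hmono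
  simp at hmono
  linarith

/-- For `μ` a probability measure supported in `[-K,K]` and `z` in a
neighborhood of `0`, `C^{(0)}_μ(z) = z R_{μ²}(z)`, where `μ²` is the push-forward
of `μ` by `t ↦ t²` and `R_ν(z) = G_ν⁻¹(z) - 1/z` is the (analytic) R-transform,
`G_ν(w) = ∫ (w - s)⁻¹ dν(s)` and `Ginv` its local inverse near `0`
(characterized by `G_{μ²}(Ginv z) = z` with `|Ginv z| > K²`). Here
`C^{(0)}_μ(z) = z/(H^{(0)}_μ)⁻¹(z) - 1` is expressed as the `γ = z/x - 1` with
`H^{(0)}_μ(x) = z`, `x ∈ [0, K⁻²)`. -/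
theorem stmt15 (K : ℝ) (hK : 0 < K) (μ : Measure ℝ) [IsProbabilityMeasure μ]
    (hsupp : μ (Set.Icc (-K) K)ᶜ = 0)
    (Ginv : ℝ → ℝ) (δ : ℝ) (hδ : 0 < δ)
    (hGinv : ∀ z : ℝ, 0 < |z| → |z| < δ →
      K ^ 2 < |Ginv z| ∧
        (∫ s, (Ginv z - s)⁻¹ ∂(Measure.map (fun t : ℝ => t ^ 2) μ)) = z) :
    ∃ ε > 0, ∀ z : ℝ, 0 < |z| → |z| < ε →
      ∀ x ∈ Set.Ico (0 : ℝ) (K ^ 2)⁻¹, Hfun 0 μ x = z →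
        ∀ γ : ℝ, γ = z / x - 1 →
          γ = z * (Ginv z - 1 / z) := by
  refine ⟨δ, hδ, ?_⟩
  intro z hz0 hzδ x hx hH γ hγ
  have hK2 : (0:ℝ) < K ^ 2 := by positivity
  have hzne : z ≠ 0 := fun h => by simp [h] at hz0
  have hxne : x ≠ 0 := by
    rintro rfl
    exact hzne (by simpa [Hfun] using hH.symm)
  have hx0 : 0 < x := lt_of_le_of_ne hx.1 (Ne.symm hxne)
  have hxK : x < (K ^ 2)⁻¹ := hx.2
  have hKx : K ^ 2 * x < 1 := by
    have := mul_lt_mul_of_pos_left hxK hK2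
    rwa [mul_inv_cancel₀ hK2.ne'] at this
  have hae : ∀ᵐ t ∂μ, t ^ 2 ≤ K ^ 2 := by
    have h : ∀ᵐ t ∂μ, t ∈ Set.Icc (-K) K := by
      rw [ae_iff]
      convert hsupp using 2
      rfl
    filter_upwards [h] with t ht
    exact sq_le_sq' ht.1 ht.2
  have hdpos : 0 < 1 - K ^ 2 * x := by linarith
  have hden : ∀ᵐ t ∂μ, 0 < 1 - t ^ 2 * x ∧ t ^ 2 * x ≤ K ^ 2 * x := by
    filter_upwards [hae] with t ht
    constructor
    · nlinarith
    · exact mul_le_mul_of_nonneg_right ht hx0.le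
  -- integrability of the M-integrand
  have hint1 : Integrable (fun t : ℝ => t ^ 2 * x / (1 - t ^ 2 * x)) μ := by
    refine int_bdd μ ?_ (C := K ^ 2 * x / (1 - K ^ 2 * x)) ?_
    · exact (((measurable_id.pow_const 2).mul_const x).div
        (measurable_const.sub ((measurable_id.pow_const 2).mul_const x))).aestronglyMeasurable
    · filter_upwards [hden] with t ⟨h1, h2⟩
      have hnn : 0 ≤ t ^ 2 * x := by positivity
      rw [abs_of_nonneg (div_nonneg hnn h1.le)]
      exact div_le_div₀ (by positivity) h2 hdpos (by nlinarith [sq_nonneg t])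
  have hint2 : Integrable (fun t : ℝ => x / (1 - t ^ 2 * x)) μ := by
    refine int_bdd μ ?_ (C := x / (1 - K ^ 2 * x)) ?_
    · exact (measurable_const.div
        (measurable_const.sub ((measurable_id.pow_const 2).mul_const x))).aestronglyMeasurable
    · filter_upwards [hden] with t ⟨h1, h2⟩
      rw [abs_of_nonneg (div_nonneg hx0.le h1.le)]
      exact div_le_div₀ hx0.le le_rfl hdpos (by nlinarith [sq_nonneg t])
  -- z = ∫ x / (1 - t² x)
  have hz_int : z = ∫ t, x / (1 - t ^ 2 * x) ∂μ := by
    have e1 : z = x * (Mfun μ x) + x := by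
      rw [← hH]; simp [Hfun, Tfun]; ring
    have e2 : x * (Mfun μ x) + x
        = ∫ t, (x * (t ^ 2 * x / (1 - t ^ 2 * x)) + x) ∂μ := by
      rw [integral_add (hint1.const_mul x) (integrable_const x), integral_const,
        probReal_univ, integral_const_mul, Mfun]
      simp
    rw [e1, e2]
    refine integral_congr_ae ?_
    filter_upwards [hden] with t ⟨h1, _⟩
    have h1' : 1 - x * t ^ 2 ≠ 0 := by rw [mul_comm]; exact h1.ne'
    field_simp
    ring
  -- G(x⁻¹) = z
  have hGx : ∫ t, (x⁻¹ - t ^ 2)⁻¹ ∂μ = z := by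
    rw [hz_int]
    refine integral_congr_ae ?_
    filter_upwards [hden] with t ⟨h1, _⟩
    have hxx : x⁻¹ - t ^ 2 = (1 - t ^ 2 * x) / x := by
      field_simp
    rw [hxx, inv_div]
  -- G(Ginv z) = z
  have hGz : ∫ t, (Ginv z - t ^ 2)⁻¹ ∂μ = z := by
    have h2 := (hGinv z hz0 hzδ).2
    rwa [integral_map (by fun_prop)
      (Measurable.aestronglyMeasurable (by fun_prop))] at h2
  -- z > 0
  have hzpos : 0 < z := by
    have hle : x ≤ z := by
      rw [hz_int]
      calc x = ∫ _t : ℝ, x ∂μ := by simp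
        _ ≤ ∫ t, x / (1 - t ^ 2 * x) ∂μ := by
            refine integral_mono_ae (integrable_const x) hint2 ?_
            filter_upwards [hden] with t ⟨h1, _⟩
            rw [le_div_iff₀ h1]
            have ht0 : 0 ≤ t ^ 2 * x := by positivity
            nlinarith
    linarith
  -- Ginv z > K²
  have hGpos : K ^ 2 < Ginv z := by
    have habs := (hGinv z hz0 hzδ).1
    by_contra hle
    push_neg at hle
    have hneg : Ginv z < 0 := by
      rcases lt_or_ge (Ginv z) 0 with h | h
      · exact h
      · rw [abs_of_nonneg h] at habs; linarith
    have hnp : ∫ t, (Ginv z - t ^ 2)⁻¹ ∂μ ≤ 0 := by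
      refine integral_nonpos_of_ae (Filter.Eventually.of_forall fun t => ?_)
      exact inv_nonpos.mpr (by nlinarith [sq_nonneg t])
    rw [hGz] at hnp
    linarith
  have hxinv : K ^ 2 < x⁻¹ := by
    have h := mul_lt_mul_of_pos_right hKx (inv_pos.2 hx0)
    rwa [mul_assoc, mul_inv_cancel₀ hxne, mul_one, one_mul] at h
  have heq : Ginv z = x⁻¹ := by
    rcases lt_trichotomy (Ginv z) x⁻¹ with h | h | h
    · have := Gmono μ hK hae hGpos h
      rw [hGx, hGz] at this; linarith
    · exact h
    · have := Gmono μ hK hae hxinv h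
      rw [hGx, hGz] at this; linarith
  rw [hγ, heq]
  field_simp
end
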